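/- Let F be a free group of rank 2, let p be a prime, let P_1 = F and P_{n+1} = P_n^p [F, P_n] be the lower p-central series of F, and for n ≥ 2 let U_n = {(x, y) ∈ F × F : x P_n = y P_n}. Then there exists a surjective group homomorphism from U_n onto P_n / P_{n+1}; consequently d(U_n) ≥ a_n, where p^{a_n} = |P_n / P_{n+1}| and d(U_n) is the least cardinality of a generating set of U_n. -/

import Mathlib

/-- One step of the lower `p`-central series: `N ↦ N^p [F, N]`, the subgroup generated
by `p`-th powers of elements of `N` together with commutators `[f, x]`, `f ∈ F`, `x ∈ N`. -/
def pStep {F : Type*} [Group F] (p : ℕ) (N : Subgroup F) : Subgroup F :=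
  Subgroup.closure ((fun x => x ^ p) '' (N : Set F)) ⊔ ⁅(⊤ : Subgroup F), N⁆

/-- Auxiliary recursion: `pAux F p k` is the `(k+1)`-st term of the lower `p`-central
series of `F`. -/
def pAux (F : Type*) [Group F] (p : ℕ) : ℕ → Subgroup F
  | 0 => ⊤
  | k + 1 => pStep p (pAux F p k)

/-- The lower `p`-central series `P_1 = F`, `P_{n+1} = P_n^p [F, P_n]`
(indexed so that `pcs F p n` is `P_n`; the value at `0` is junk, equal to `P_1 = F`). -/
def pcs (F : Type*) [Group F] (p : ℕ) (n : ℕ) : Subgroup F := pAux F p (n - 1)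

theorem closure_conjInvariant_normal {F : Type*} [Group F] {s : Set F}
    (hs : ∀ g : F, ∀ x ∈ s, g * x * g⁻¹ ∈ s) : (Subgroup.closure s).Normal := by
  constructor
  intro n hn g
  have h1 : (Subgroup.closure s).map (MulAut.conj g).toMonoidHom ≤ Subgroup.closure s := by
    rw [MonoidHom.map_closure]
    apply Subgroup.closure_mono
    rintro _ ⟨x, hx, rfl⟩
    exact hs g x hx
  exact h1 ⟨n, hn, rfl⟩

instance pAux_normal (F : Type*) [Group F] (p k : ℕ) : (pAux F p k).Normal := by
  induction k with
  | zero => exact inferInstanceAs (⊤ : Subgroup F).Normal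
  | succ k ih =>
    show (pStep p (pAux F p k)).Normal
    have h1 : (Subgroup.closure ((fun x => x ^ p) '' ((pAux F p k) : Set F))).Normal := by
      apply closure_conjInvariant_normal
      rintro g _ ⟨x, hx, rfl⟩
      exact ⟨g * x * g⁻¹, ih.conj_mem x hx g, conj_pow⟩
    haveI := h1
    exact Subgroup.sup_normal _ _
  
instance pcs_normal (F : Type*) [Group F] (p n : ℕ) : (pcs F p n).Normal :=
  pAux_normal F p (n - 1)

theorem pAux_succ_le (F : Type*) [Group F] (p k : ℕ) : pAux F p (k + 1) ≤ pAux F p k := by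
  apply sup_le
  · rw [Subgroup.closure_le]
    rintro _ ⟨x, hx, rfl⟩
    exact (pAux F p k).pow_mem hx p
  · exact Subgroup.commutator_le_right ⊤ (pAux F p k)

theorem pcs_succ_le (F : Type*) [Group F] (p n : ℕ) : pcs F p (n + 1) ≤ pcs F p n := by
  cases n with
  | zero => exact le_rfl
  | succ n => exact pAux_succ_le F p n

/-- The diagonal subgroup of `Q × Q`. -/
def diagSubgroup (Q : Type*) [Group Q] : Subgroup (Q × Q) :=
  ((MonoidHom.id Q).prod (MonoidHom.id Q)).range

/-- The fiber product `U_n = {(x, y) ∈ F × F : x P_n = y P_n}`, where `P_n` is the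
lower `p`-central series of `F`. -/
def fiberU (F : Type*) [Group F] (p n : ℕ) : Subgroup (F × F) :=
  Subgroup.comap
    ((QuotientGroup.mk' (pcs F p n)).prodMap (QuotientGroup.mk' (pcs F p n)))
    (diagSubgroup (F ⧸ pcs F p n))

/-- `d K` is the least cardinality of a (finite) generating set of the group `K`. -/
noncomputable def minGens (K : Type*) [Group K] : ℕ :=
  sInf {n : ℕ | ∃ S : Finset K, S.card = n ∧ Subgroup.closure (S : Set K) = ⊤}


section Aux

open Subgroup

open scoped commutatorElement

variable {G : Type*} [Group G]

theorem pow_mem_pStep {p : ℕ} {N : Subgroup G} {x : G} (hx : x ∈ N) :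
    x ^ p ∈ pStep p N :=
  le_sup_left (α := Subgroup G) (Subgroup.subset_closure ⟨x, hx, rfl⟩)

theorem commutator_mem_pStep {p : ℕ} {N : Subgroup G} {g x : G} (hx : x ∈ N) :
    ⁅g, x⁆ ∈ pStep p N :=
  le_sup_right (α := Subgroup G)
    (Subgroup.commutator_mem_commutator (Subgroup.mem_top g) hx)

theorem pAux_succ (p m : ℕ) : pAux G p (m + 1) = pStep p (pAux G p m) := rfl

theorem quot_comm (p m : ℕ)
    (x y : pAux G p m ⧸ (pAux G p (m + 1)).subgroupOf (pAux G p m)) :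
    x * y = y * x := by
  induction x using QuotientGroup.induction_on with
  | H a =>
  induction y using QuotientGroup.induction_on with
  | H b =>
  rw [← QuotientGroup.mk_mul, ← QuotientGroup.mk_mul, QuotientGroup.eq,
    Subgroup.mem_subgroupOf]
  have hcoe : (((a * b)⁻¹ * (b * a) : pAux G p m) : G) = ⁅(b : G)⁻¹, (a : G)⁻¹⁆ := by
    push_cast
    simp [commutatorElement_def, mul_assoc]
  rw [hcoe, pAux_succ]
  exact commutator_mem_pStep ((pAux G p m).inv_mem a.2)

theorem quot_pow (p m : ℕ)
    (x : pAux G p m ⧸ (pAux G p (m + 1)).subgroupOf (pAux G p m)) :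
    x ^ p = 1 := by
  induction x using QuotientGroup.induction_on with
  | H a =>
  rw [← QuotientGroup.mk_pow, QuotientGroup.eq_one_iff, Subgroup.mem_subgroupOf]
  have hcoe : ((a ^ p : pAux G p m) : G) = (a : G) ^ p := by push_cast; ring_nf
  rw [hcoe, pAux_succ]
  exact pow_mem_pStep a.2

/-- An additive group of exponent `p` generated by `T` has cardinality at most
`p ^ T.card`, and is finite. -/
theorem add_card_le {A : Type*} [AddCommGroup A] {p : ℕ} (hp : p.Prime)
    (hsmul : ∀ x : A, p • x = 0) (T : Finset A)
    (hT : AddSubgroup.closure (T : Set A) = ⊤) :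
    Finite A ∧ Nat.card A ≤ p ^ T.card := by
  haveI : Fact p.Prime := ⟨hp⟩
  haveI : NeZero p := ⟨hp.ne_zero⟩
  have mod : Module (ZMod p) A := AddCommGroup.zmodModule hsmul
  letI := mod
  have hspan : Submodule.span (ZMod p) (T : Set A) = ⊤ := by
    rw [Submodule.eq_top_iff']
    intro x
    have hx : x ∈ AddSubgroup.closure (T : Set A) := by rw [hT]; trivial
    induction hx using AddSubgroup.closure_induction with
    | mem z hz => exact Submodule.subset_span hz
    | zero => exact Submodule.zero_mem _
    | add z w _ _ hz hw => exact Submodule.add_mem _ hz hw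
    | neg z _ hz => exact Submodule.neg_mem _ hz
  haveI : Module.Finite (ZMod p) A := ⟨⟨T, by rw [hspan]⟩⟩
  haveI hfinA : Finite A := Module.finite_of_finite (ZMod p)
  refine ⟨hfinA, ?_⟩
  haveI : Fintype A := Fintype.ofFinite _
  have hcard : Fintype.card A = p ^ Module.finrank (ZMod p) A := by
    rw [Module.card_eq_pow_finrank (K := ZMod p) (V := A), ZMod.card]
  have hrank : Module.finrank (ZMod p) A ≤ T.card := by
    have h1 : Set.finrank (ZMod p) (T : Set A) ≤ T.card :=
      finrank_span_finset_le_card T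
    rw [Set.finrank, hspan, finrank_top] at h1
    exact h1
  rw [Nat.card_eq_fintype_card, hcard]
  exact Nat.pow_le_pow_right hp.pos hrank

/-- A group of exponent `p` which is commutative and generated by `S` has cardinality
at most `p ^ S.card`, and is finite. -/
theorem card_le_of_gen {Q : Type*} [Group Q] {p : ℕ} (hp : p.Prime)
    (hcomm : ∀ x y : Q, x * y = y * x) (hpow : ∀ x : Q, x ^ p = 1)
    (S : Finset Q) (hS : Subgroup.closure (S : Set Q) = ⊤) :
    Finite Q ∧ Nat.card Q ≤ p ^ S.card := by
  classical
  letI acg : AddCommGroup (Additive Q) :=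
    { (inferInstance : AddGroup (Additive Q)) with
      add_comm := fun a b => hcomm a.toMul b.toMul }
  have hsmul : ∀ x : Additive Q, p • x = 0 := by
    intro x
    show Additive.ofMul ((Additive.toMul x) ^ p) = 0
    rw [hpow]
    rfl
  set T : Finset (Additive Q) := S.image (fun q : Q => Additive.ofMul q) with hTdef
  have hT : AddSubgroup.closure (T : Set (Additive Q)) = ⊤ := by
    rw [AddSubgroup.eq_top_iff']
    intro x
    have hx : Additive.toMul x ∈ Subgroup.closure (S : Set Q) := by rw [hS]; trivial
    have key : ∀ y : Q, y ∈ Subgroup.closure (S : Set Q) →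
        Additive.ofMul y ∈ AddSubgroup.closure (T : Set (Additive Q)) := by
      intro y hy
      induction hy using Subgroup.closure_induction with
      | mem z hz =>
        refine AddSubgroup.subset_closure ?_
        rw [hTdef]
        simp only [Finset.coe_image, Set.mem_image, Finset.mem_coe]
        exact ⟨z, hz, rfl⟩
      | one => exact AddSubgroup.zero_mem _
      | mul z w _ _ hz hw => exact AddSubgroup.add_mem _ hz hw
      | inv z _ hz => exact AddSubgroup.neg_mem _ hz
    exact key (Additive.toMul x) hx
  obtain ⟨hfin, hcard⟩ := add_card_le hp hsmul T hT
  have hTS : T.card ≤ S.card := Finset.card_image_le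
  refine ⟨Finite.of_equiv _ (Additive.toMul (α := Q)), ?_⟩
  have hQA : Nat.card Q = Nat.card (Additive Q) :=
    Nat.card_congr (Additive.ofMul (α := Q))
  rw [hQA]
  exact le_trans hcard (Nat.pow_le_pow_right hp.pos hTS)

/-- The product of two finitely generated groups is finitely generated. -/
theorem Group.FG.myprod {G H : Type*} [Group G] [Group H] [Group.FG G] [Group.FG H] :
    Group.FG (G × H) := by
  obtain ⟨SG, hSG, hfG⟩ := Group.fg_iff.mp ‹Group.FG G›
  obtain ⟨SH, hSH, hfH⟩ := Group.fg_iff.mp ‹Group.FG H›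
  refine Group.fg_iff.mpr ⟨(MonoidHom.inl G H) '' SG ∪ (MonoidHom.inr G H) '' SH, ?_,
    (hfG.image _).union (hfH.image _)⟩
  have hl : (MonoidHom.inl G H).range ≤
      Subgroup.closure ((MonoidHom.inl G H) '' SG ∪ (MonoidHom.inr G H) '' SH) := by
    rw [MonoidHom.range_eq_map, ← hSG, MonoidHom.map_closure]
    exact Subgroup.closure_mono Set.subset_union_left
  have hr : (MonoidHom.inr G H).range ≤
      Subgroup.closure ((MonoidHom.inl G H) '' SG ∪ (MonoidHom.inr G H) '' SH) := by
    rw [MonoidHom.range_eq_map, ← hSH, MonoidHom.map_closure]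
    exact Subgroup.closure_mono Set.subset_union_right
  rw [eq_top_iff]
  rintro ⟨g, h⟩ -
  have : (g, h) = (g, 1) * (1, h) := by simp
  rw [this]
  exact mul_mem (hl ⟨g, rfl⟩) (hr ⟨h, rfl⟩)

instance : Group.FG (FreeGroup (Fin 2)) :=
  Group.fg_iff.mpr ⟨Set.range FreeGroup.of, FreeGroup.closure_range_of _,
    Set.finite_range _⟩

theorem finite_quot_pAux (p : ℕ) (hp : p.Prime) :
    ∀ k, Finite (FreeGroup (Fin 2) ⧸ pAux (FreeGroup (Fin 2)) p k) := by
  intro k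
  induction k with
  | zero =>
    have h0 : pAux (FreeGroup (Fin 2)) p 0 = ⊤ := rfl
    rw [h0]
    haveI : Subsingleton (FreeGroup (Fin 2) ⧸ (⊤ : Subgroup (FreeGroup (Fin 2)))) :=
      QuotientGroup.subsingleton_quotient_top
    exact Finite.of_subsingleton
  | succ k ih =>
    set F := FreeGroup (Fin 2)
    haveI : Finite (F ⧸ pAux F p k) := ih
    haveI : (pAux F p k).FiniteIndex := Subgroup.finiteIndex_of_finite_quotient
    haveI : Group.FG (pAux F p k) := Subgroup.fg_of_index_ne_zero _
    haveI : Group.FG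
        (pAux F p k ⧸ (pAux F p (k + 1)).subgroupOf (pAux F p k)) :=
      QuotientGroup.fg _
    obtain ⟨nn, S, -, hS⟩ := Group.fg_iff'.mp this
    have hfin : Finite
        (pAux F p k ⧸ (pAux F p (k + 1)).subgroupOf (pAux F p k)) :=
      (card_le_of_gen hp (quot_comm p k) (quot_pow p k) S hS).1
    have hrel : (pAux F p (k + 1)).relIndex (pAux F p k) ≠ 0 := by
      have : Nat.card
          (pAux F p k ⧸ (pAux F p (k + 1)).subgroupOf (pAux F p k)) ≠ 0 :=
        Nat.card_ne_zero.mpr ⟨⟨1⟩, hfin⟩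
      exact this
    have hidx : (pAux F p (k + 1)).index ≠ 0 := by
      rw [← Subgroup.relIndex_mul_index (pAux_succ_le F p k)]
      exact Nat.mul_ne_zero hrel Subgroup.FiniteIndex.index_ne_zero
    haveI : (pAux F p (k + 1)).FiniteIndex := ⟨hidx⟩
    exact Subgroup.finite_quotient_of_finiteIndex

theorem mem_fiberU {p n : ℕ} {u : G × G} :
    u ∈ fiberU G p n ↔ u.1⁻¹ * u.2 ∈ pcs G p n := by
  rw [fiberU, Subgroup.mem_comap]
  constructor
  · rintro ⟨y, hy⟩
    have h1 : (y : G ⧸ pcs G p n) = QuotientGroup.mk u.1 ∧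
        (y : G ⧸ pcs G p n) = QuotientGroup.mk u.2 := by
      constructor
      · exact congrArg Prod.fst hy
      · exact congrArg Prod.snd hy
    have h2 : (QuotientGroup.mk u.1 : G ⧸ pcs G p n) = QuotientGroup.mk u.2 :=
      h1.1 ▸ h1.2
    exact QuotientGroup.eq.mp h2
  · intro h
    refine ⟨QuotientGroup.mk u.1, ?_⟩
    have : (QuotientGroup.mk u.1 : G ⧸ pcs G p n) = QuotientGroup.mk u.2 :=
      QuotientGroup.eq.mpr h
    exact Prod.ext rfl this

/-- The surjection `ψ : U_n → P_n / P_{n+1}` given by `(x, y) ↦ x⁻¹ y`. -/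
theorem exists_psi (p m : ℕ) :
    ∃ ψ : fiberU G p (m + 2) →*
        (pcs G p (m + 2) ⧸ (pcs G p (m + 3)).subgroupOf (pcs G p (m + 2))),
      Function.Surjective ψ := by
  have hstep : pcs G p (m + 3) = pStep p (pcs G p (m + 2)) := rfl
  refine ⟨{
      toFun := fun u => QuotientGroup.mk
        (⟨(u : (G × G)).1⁻¹ * (u : (G × G)).2, mem_fiberU.mp u.2⟩ : pcs G p (m + 2))
      map_one' := ?_
      map_mul' := ?_ }, ?_⟩
  · rw [QuotientGroup.eq_one_iff, Subgroup.mem_subgroupOf]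
    show ((1 : G × G).1)⁻¹ * (1 : G × G).2 ∈ pcs G p (m + 3)
    simpa using (pcs G p (m + 3)).one_mem
  · intro u v
    rw [← QuotientGroup.mk_mul, QuotientGroup.eq, Subgroup.mem_subgroupOf]
    set A := (u : G × G).1
    set B := (u : G × G).2
    set C := (v : G × G).1
    set D := (v : G × G).2
    have habm : A⁻¹ * B ∈ pcs G p (m + 2) := mem_fiberU.mp u.2
    have hmemN : (A⁻¹ * B)⁻¹ ∈ pcs G p (m + 2) :=
      (pcs G p (m + 2)).inv_mem habm
    have hcomm : ⁅C⁻¹, (A⁻¹ * B)⁻¹⁆ ∈ pcs G p (m + 3) := by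
      rw [hstep]; exact commutator_mem_pStep hmemN
    have hconj : (C⁻¹ * D)⁻¹ * ⁅C⁻¹, (A⁻¹ * B)⁻¹⁆ * (C⁻¹ * D) ∈ pcs G p (m + 3) := by
      have := (pcs_normal G p (m + 3)).conj_mem _ hcomm (C⁻¹ * D)⁻¹
      simpa using this
    have hval : ((((⟨((u * v : fiberU G p (m + 2)) : G × G).1⁻¹ *
          ((u * v : fiberU G p (m + 2)) : G × G).2,
          mem_fiberU.mp (u * v).2⟩ : pcs G p (m + 2)))⁻¹ *
        ((⟨A⁻¹ * B, mem_fiberU.mp u.2⟩ : pcs G p (m + 2)) *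
         (⟨C⁻¹ * D, mem_fiberU.mp v.2⟩ : pcs G p (m + 2))) : pcs G p (m + 2)) : G) =
        (C⁻¹ * D)⁻¹ * ⁅C⁻¹, (A⁻¹ * B)⁻¹⁆ * (C⁻¹ * D) := by
      push_cast
      show ((A * C)⁻¹ * (B * D))⁻¹ * ((A⁻¹ * B) * (C⁻¹ * D)) = _
      simp only [commutatorElement_def]
      group
    rw [hval]
    exact hconj
  · intro q
    induction q using QuotientGroup.induction_on with
    | H z =>
    refine ⟨⟨((1 : G), (z : G)), mem_fiberU.mpr (by simpa using z.2)⟩, ?_⟩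
    exact congrArg QuotientGroup.mk (Subtype.ext (by simp))

end Aux

/-- for the free group `F` of rank 2, a prime `p`, the lower `p`-central
series `P_n` of `F`, and `U_n = {(x,y) : x P_n = y P_n}` (`n ≥ 2`), the group `U_n`
surjects onto `P_n / P_{n+1}`; consequently `d(U_n) ≥ a_n` where
`p ^ (a n) = |P_n / P_{n+1}|`. -/
theorem stmt14 (p : ℕ) (hp : p.Prime) (n : ℕ) (hn : 2 ≤ n) (a : ℕ → ℕ)
    (ha : p ^ a n =
      (pcs (FreeGroup (Fin 2)) p (n + 1)).relIndex (pcs (FreeGroup (Fin 2)) p n)) :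
    (∃ ψ : fiberU (FreeGroup (Fin 2)) p n →*
        (pcs (FreeGroup (Fin 2)) p n ⧸
          (pcs (FreeGroup (Fin 2)) p (n + 1)).subgroupOf (pcs (FreeGroup (Fin 2)) p n)),
      Function.Surjective ψ) ∧
    a n ≤ minGens (fiberU (FreeGroup (Fin 2)) p n) := by
  classical
  obtain ⟨m, rfl⟩ : ∃ m, n = m + 2 := ⟨n - 2, by omega⟩
  set F := FreeGroup (Fin 2)
  obtain ⟨ψ, hψ⟩ := exists_psi (G := F) p m
  refine ⟨⟨ψ, hψ⟩, ?_⟩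
  haveI hfq : Finite (F ⧸ pcs F p (m + 2)) := finite_quot_pAux p hp (m + 1)
  haveI : (fiberU F p (m + 2)).FiniteIndex := by
    constructor
    show (Subgroup.comap _ _).index ≠ 0
    rw [Subgroup.index_comap]
    show ((diagSubgroup _).subgroupOf _).index ≠ 0
    exact Subgroup.FiniteIndex.index_ne_zero
  haveI : Group.FG (F × F) := Group.FG.myprod
  haveI hUfg : Group.FG (fiberU F p (m + 2)) := Subgroup.fg_of_index_ne_zero _
  obtain ⟨t0, S0, hc0, hs0⟩ := Group.fg_iff'.mp hUfg
  have hne : {t : ℕ | ∃ S : Finset (fiberU F p (m + 2)), S.card = t ∧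
      Subgroup.closure (S : Set (fiberU F p (m + 2))) = ⊤}.Nonempty :=
    ⟨t0, S0, hc0, hs0⟩
  apply le_csInf hne
  rintro t ⟨S, rfl, hclos⟩
  have hquot_comm : ∀ x y : (pcs F p (m + 2) ⧸
      (pcs F p (m + 3)).subgroupOf (pcs F p (m + 2))), x * y = y * x :=
    quot_comm (G := F) p (m + 1)
  have hquot_pow : ∀ x : (pcs F p (m + 2) ⧸
      (pcs F p (m + 3)).subgroupOf (pcs F p (m + 2))), x ^ p = 1 :=
    quot_pow (G := F) p (m + 1)
  have himg : Subgroup.closure ((S.image ψ : Finset (pcs F p (m + 2) ⧸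
      (pcs F p (m + 3)).subgroupOf (pcs F p (m + 2)))) : Set (pcs F p (m + 2) ⧸
      (pcs F p (m + 3)).subgroupOf (pcs F p (m + 2)))) = ⊤ := by
    have h1 : Subgroup.map ψ (Subgroup.closure (S : Set (fiberU F p (m + 2)))) =
        Subgroup.closure (ψ '' S) := MonoidHom.map_closure ψ _
    rw [hclos] at h1
    have h2 : Subgroup.map ψ ⊤ = ⊤ := by
      rw [← MonoidHom.range_eq_map]
      exact MonoidHom.range_eq_top_of_surjective ψ hψ
    rw [h2] at h1
    rw [Finset.coe_image]
    exact h1.symm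
  have hbound := card_le_of_gen hp hquot_comm hquot_pow (S.image ψ) himg
  have hcardQ : Nat.card (pcs F p (m + 2) ⧸
      (pcs F p (m + 3)).subgroupOf (pcs F p (m + 2))) = p ^ a (m + 2) := by
    rw [ha]; rfl
  have hle : p ^ a (m + 2) ≤ p ^ (S.image ψ).card := hcardQ ▸ hbound.2
  have hfin : p ^ a (m + 2) ≤ p ^ S.card :=
    le_trans hle (Nat.pow_le_pow_right hp.pos Finset.card_image_le)
  exact (Nat.pow_le_pow_iff_right hp.one_lt).mp hfin
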